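/- The function f(x) = e^x / ((1 + e^x)·ln(1 + e^x)) is strictly decreasing on ℝ. -/

import Mathlib

/-- Appendix C: f(x) = e^x / ((1 + e^x)·ln(1 + e^x)) is strictly decreasing on ℝ. -/
theorem strictAnti_exp_div_one_add_exp_log :
    StrictAnti (fun x : ℝ =>
      Real.exp x / ((1 + Real.exp x) * Real.log (1 + Real.exp x))) := by
  have key : ∀ x : ℝ, Real.exp x / ((1 + Real.exp x) * Real.log (1 + Real.exp x))
      = ((1 + Real.exp (-x)) * Real.log (1 + Real.exp x))⁻¹ := by
    intro x
    rw [Real.exp_neg]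
    have h0 : Real.exp x ≠ 0 := (Real.exp_pos x).ne'
    field_simp
    ring
  have hD : StrictMono (fun x : ℝ => (1 + Real.exp (-x)) * Real.log (1 + Real.exp x)) := by
    apply strictMono_of_deriv_pos
    intro x
    have h1 : HasDerivAt (fun x : ℝ => 1 + Real.exp (-x)) (-Real.exp (-x)) x := by
      simpa using ((Real.hasDerivAt_exp (-x)).comp x ((hasDerivAt_id x).neg)).const_add 1
    have h2 : HasDerivAt (fun x : ℝ => Real.log (1 + Real.exp x))
        (Real.exp x / (1 + Real.exp x)) x := by
      have := (Real.hasDerivAt_exp x).const_add 1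
      exact this.log (by positivity)
    have h : HasDerivAt (fun x : ℝ => (1 + Real.exp (-x)) * Real.log (1 + Real.exp x)) _ x :=
      h1.mul h2
    rw [h.deriv]
    have hlt : Real.log (1 + Real.exp x) < Real.exp x := by
      have := Real.log_lt_sub_one_of_pos (x := 1 + Real.exp x) (by positivity)
        (by nlinarith [Real.exp_pos x])
      linarith
    have hterm : (1 + Real.exp (-x)) * (Real.exp x / (1 + Real.exp x)) = 1 := by
      rw [Real.exp_neg]
      have h0 : Real.exp x ≠ 0 := (Real.exp_pos x).ne'
      have h1 : (1 : ℝ) + Real.exp x ≠ 0 := by positivity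
      field_simp
      ring
    have hsmall : Real.exp (-x) * Real.log (1 + Real.exp x) < 1 := by
      calc Real.exp (-x) * Real.log (1 + Real.exp x)
          < Real.exp (-x) * Real.exp x := mul_lt_mul_of_pos_left hlt (Real.exp_pos _)
        _ = 1 := by rw [← Real.exp_add]; simp
    rw [hterm]
    linarith
  intro a b hab
  simp only [key]
  have hpos : 0 < (1 + Real.exp (-a)) * Real.log (1 + Real.exp a) := by
    have := Real.log_pos (by nlinarith [Real.exp_pos a] : (1:ℝ) < 1 + Real.exp a)
    positivity
  exact inv_strictAnti₀ hpos (hD hab)
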